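/- Let n and m be positive integers, s, t > 0, and let X and Y be independent real random variables with the inverse-gamma distributions iG(n, s) and iG(m, t), respectively. Then for every measurable set S ⊆ (0, ∞): Pr[Y ∈ S and X ≥ Y] = ∫_S (γ(n, s/y)/Γ(n)) · (t^m/Γ(m)) · y^{−m−1} e^{−t/y} dy. (Hence the 'lower double inverse-gamma' density of Y on the event {X ≥ Y} is (γ(n, s/y)/Γ(n)) · iG(m,t)-density(y) / I_p(n, m), with p = s/(s+t).) -/

import Mathlib

open MeasureTheory ProbabilityTheory

/-- The lower incomplete gamma function `γ(n, x) = ∫_0^x u^{n-1} e^{-u} du` for a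
positive integer parameter `n`. -/
noncomputable def lowerIncGamma (n : ℕ) (x : ℝ) : ℝ :=
  ∫ u in (0:ℝ)..x, u ^ (n - 1) * Real.exp (-u)

/-- The density of the inverse-gamma distribution `iG(n, s)` with shape `n` and
scale `s`: `s^n/Γ(n) ⬝ x^{-n-1} e^{-s/x}` on `(0, ∞)`. -/
noncomputable def invGammaPDFReal (n : ℕ) (s x : ℝ) : ℝ :=
  if 0 < x then s ^ n / Real.Gamma n * x ^ (-(n : ℤ) - 1) * Real.exp (-(s / x)) else 0

/-- The inverse-gamma measure `iG(n, s)` on `ℝ`. -/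
noncomputable def invGammaMeasure (n : ℕ) (s : ℝ) : Measure ℝ :=
  volume.withDensity fun x => ENNReal.ofReal (invGammaPDFReal n s x)

lemma image_inv_Ioo {s y : ℝ} (hs : 0 < s) (hy : 0 < y) :
    (fun u => s / u) '' Set.Ioo 0 (s / y) = Set.Ioi y := by
  ext x
  constructor
  · rintro ⟨u, ⟨hu0, hu1⟩, rfl⟩
    have : y < s / u := by
      rw [lt_div_iff₀ hu0]
      calc y * u < y * (s / y) := mul_lt_mul_of_pos_left hu1 hy
        _ = s := by field_simp
    simpa using this
  · intro hx
    have hx0 : 0 < x := hy.trans hx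
    refine ⟨s / x, ⟨div_pos hs hx0, ?_⟩, by field_simp⟩
    exact div_lt_div_of_pos_left hs hy hx

lemma hasDeriv_inv_Ioo {s y : ℝ} :
    ∀ u ∈ Set.Ioo (0:ℝ) (s / y), HasDerivWithinAt (fun u => s / u)
      (-(s / u ^ 2)) (Set.Ioo 0 (s / y)) u := by
  intro u hu
  have hu0 : u ≠ 0 := ne_of_gt hu.1
  have := ((hasDerivAt_inv hu0).const_mul s).hasDerivWithinAt (s := Set.Ioo (0:ℝ) (s/y))
  simpa [div_eq_mul_inv, neg_div, mul_comm, mul_assoc, pow_two] using this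

lemma injOn_inv_Ioo {s y : ℝ} (hs : 0 < s) :
    Set.InjOn (fun u => s / u) (Set.Ioo 0 (s / y)) := by
  intro a ha b hb h
  simp only at h
  rw [div_eq_div_iff (ne_of_gt ha.1) (ne_of_gt hb.1)] at h
  exact mul_left_cancel₀ (ne_of_gt hs) h.symm

lemma invGammaPDFReal_nonneg (n : ℕ) {s : ℝ} (hn : 0 < n) (hs : 0 < s) (x : ℝ) :
    0 ≤ invGammaPDFReal n s x := by
  unfold invGammaPDFReal
  split_ifs with h
  · have hΓ : 0 < Real.Gamma n := Real.Gamma_pos_of_pos (by exact_mod_cast hn)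
    exact mul_nonneg (mul_nonneg (div_nonneg (by positivity) hΓ.le)
      (zpow_nonneg h.le _)) (Real.exp_nonneg _)
  · exact le_refl _

lemma deriv_smul_eq (n : ℕ) (hn : 0 < n) {s y : ℝ} (hs : 0 < s) (hy : 0 < y)
    {u : ℝ} (hu : u ∈ Set.Ioo (0:ℝ) (s / y)) :
    |(-(s / u ^ 2))| • invGammaPDFReal n s (s / u)
      = u ^ (n - 1) * Real.exp (-u) / Real.Gamma n := by
  have hu0 : 0 < u := hu.1
  have hsu : 0 < s / u := div_pos hs hu0
  have hΓ : 0 < Real.Gamma n := Real.Gamma_pos_of_pos (by exact_mod_cast hn)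
  rw [invGammaPDFReal, if_pos hsu]
  have h1 : s / (s / u) = u := by field_simp
  have h2 : (s / u) ^ (-(n:ℤ) - 1) = (u / s) ^ (n + 1) := by
    rw [show (-(n:ℤ) - 1) = -((n:ℤ)+1) by ring, zpow_neg, ← zpow_natCast]
    push_cast
    rw [← inv_zpow, inv_div]
  rw [h1, h2, abs_of_nonpos (neg_nonpos.mpr (by positivity)), smul_eq_mul]
  have h3 : u ^ (n + 1) = u ^ (n - 1) * u ^ 2 := by
    rw [← pow_add]
    congr 1
    omega
  rw [div_pow, h3]
  field_simp
  ring

lemma integral_invGamma_Ioi (n : ℕ) (hn : 0 < n) {s y : ℝ} (hs : 0 < s) (hy : 0 < y) :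
    ∫ x in Set.Ioi y, invGammaPDFReal n s x = lowerIncGamma n (s / y) / Real.Gamma n := by
  rw [← image_inv_Ioo hs hy,
    integral_image_eq_integral_abs_deriv_smul measurableSet_Ioo hasDeriv_inv_Ioo
      (injOn_inv_Ioo hs) (invGammaPDFReal n s)]
  rw [setIntegral_congr_fun measurableSet_Ioo (fun u hu => deriv_smul_eq n hn hs hy hu)]
  have hsy : (0:ℝ) ≤ s / y := (div_pos hs hy).le
  rw [lowerIncGamma, intervalIntegral.integral_of_le hsy,
    MeasureTheory.integral_Ioc_eq_integral_Ioo, ← integral_div]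

lemma integrableOn_invGamma_Ioi (n : ℕ) (hn : 0 < n) {s y : ℝ} (hs : 0 < s) (hy : 0 < y) :
    IntegrableOn (invGammaPDFReal n s) (Set.Ioi y) := by
  rw [← image_inv_Ioo hs hy,
    integrableOn_image_iff_integrableOn_abs_deriv_smul measurableSet_Ioo hasDeriv_inv_Ioo
      (injOn_inv_Ioo hs) (invGammaPDFReal n s)]
  apply MeasureTheory.Integrable.congr
    (f := fun u => u ^ (n - 1) * Real.exp (-u) / Real.Gamma n)
  · exact ((by continuity : Continuous fun u : ℝ => u ^ (n - 1) * Real.exp (-u) / Real.Gamma n).integrableOn_Icc).mono_set Set.Ioo_subset_Icc_self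
  · filter_upwards [ae_restrict_mem measurableSet_Ioo] with u hu
    exact (deriv_smul_eq n hn hs hy hu).symm

lemma invGammaMeasure_Ici (n : ℕ) (hn : 0 < n) {s y : ℝ} (hs : 0 < s) (hy : 0 < y) :
    invGammaMeasure n s (Set.Ici y)
      = ENNReal.ofReal (lowerIncGamma n (s / y) / Real.Gamma n) := by
  have hmeas : Measurable (invGammaPDFReal n s) := by
    unfold invGammaPDFReal
    apply Measurable.ite measurableSet_Ioi <;> fun_prop
  rw [invGammaMeasure, withDensity_apply _ measurableSet_Ici]
  rw [show volume.restrict (Set.Ici y) = volume.restrict (Set.Ioi y) from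
    (Measure.restrict_congr_set MeasureTheory.Ioi_ae_eq_Ici.symm)]
  rw [← MeasureTheory.ofReal_integral_eq_lintegral_ofReal
    (integrableOn_invGamma_Ioi n hn hs hy)
    (ae_of_all _ (invGammaPDFReal_nonneg n hn hs)),
    integral_invGamma_Ioi n hn hs hy]

lemma lowerIncGamma_nonneg (n : ℕ) {x : ℝ} (hx : 0 ≤ x) : 0 ≤ lowerIncGamma n x := by
  apply intervalIntegral.integral_nonneg hx
  intro u hu
  have : 0 ≤ u := hu.1
  positivity

lemma invGammaMeasure_ne_zero (n : ℕ) (hn : 0 < n) {s : ℝ} (hs : 0 < s) :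
    invGammaMeasure n s ≠ 0 := by
  have hΓ : 0 < Real.Gamma n := Real.Gamma_pos_of_pos (by exact_mod_cast hn)
  set c : ℝ := s ^ n / Real.Gamma n * ((2:ℝ) ^ (n + 1))⁻¹ * Real.exp (-s) with hc
  have hcpos : 0 < c := by
    apply mul_pos (mul_pos (div_pos (pow_pos hs n) hΓ) (by positivity)) (Real.exp_pos _)
  have key : ENNReal.ofReal c * volume (Set.Ioc (1:ℝ) 2)
      ≤ invGammaMeasure n s (Set.Ioc 1 2) := by
    rw [invGammaMeasure, withDensity_apply _ measurableSet_Ioc, ← setLIntegral_const]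
    apply setLIntegral_mono' measurableSet_Ioc
    intro x hx
    apply ENNReal.ofReal_le_ofReal
    have hx0 : (0:ℝ) < x := lt_trans one_pos hx.1
    rw [invGammaPDFReal, if_pos hx0]
    have e1 : x ^ (-(n:ℤ) - 1) = (x ^ (n + 1))⁻¹ := by
      rw [show (-(n:ℤ) - 1) = -((n:ℤ) + 1) by ring, zpow_neg, ← zpow_natCast]
      norm_cast
    rw [e1, hc]
    gcongr
    all_goals first
      | positivity
      | exact hx0.le
      | exact hx.2
      | exact div_le_self hs.le hx.1.le
      | exact Real.exp_le_exp.mpr (neg_le_neg (div_le_self hs.le hx.1.le))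
  intro h
  rw [h] at key
  simp only [Measure.coe_zero, Pi.zero_apply, nonpos_iff_eq_zero, mul_eq_zero] at key
  rcases key with h1 | h2
  · exact absurd h1 (by simp [ENNReal.ofReal_eq_zero, not_le, hcpos])
  · rw [Real.volume_Ioc] at h2
    norm_num at h2

instance invGammaMeasure.instSFinite (n : ℕ) (s : ℝ) : SFinite (invGammaMeasure n s) := by
  unfold invGammaMeasure; infer_instance

/-- If `X ~ iG(n, s)` and `Y ~ iG(m, t)` are independent inverse-gamma random
variables, then for every measurable `S ⊆ (0, ∞)`,
`Pr[Y ∈ S and X ≥ Y] = ∫_S (γ(n, s/y)/Γ(n)) ⬝ (t^m/Γ(m)) y^{-m-1} e^{-t/y} dy`,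
i.e. the (unnormalized) lower double inverse-gamma density of `Y` on `{X ≥ Y}` is
the lower incomplete gamma factor times the `iG(m, t)` density. -/
theorem prob_mem_and_ge_eq_integral_lowerDoubleInvGamma
    {Ω : Type*} {mΩ : MeasurableSpace Ω} (P : Measure Ω) [IsProbabilityMeasure P]
    (n m : ℕ) (hn : 0 < n) (hm : 0 < m) (s t : ℝ) (hs : 0 < s) (ht : 0 < t)
    (X Y : Ω → ℝ)
    (hX : Measure.map X P = invGammaMeasure n s)
    (hY : Measure.map Y P = invGammaMeasure m t)
    (hXY : IndepFun X Y P)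
    (S : Set ℝ) (hS : MeasurableSet S) (hS0 : S ⊆ Set.Ioi 0) :
    (P ({ω | Y ω ∈ S} ∩ {ω | X ω ≥ Y ω})).toReal =
      ∫ y in S,
        (lowerIncGamma n (s / y) / Real.Gamma n) *
          (t ^ m / Real.Gamma m * y ^ (-(m : ℤ) - 1) * Real.exp (-(t / y))) := by
  have hΓn : 0 < Real.Gamma n := Real.Gamma_pos_of_pos (by exact_mod_cast hn)
  have hΓm : 0 < Real.Gamma m := Real.Gamma_pos_of_pos (by exact_mod_cast hm)
  have hXm : AEMeasurable X P := by
    by_contra h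
    rw [Measure.map_of_not_aemeasurable h] at hX
    exact invGammaMeasure_ne_zero n hn hs hX.symm
  have hYm : AEMeasurable Y P := by
    by_contra h
    rw [Measure.map_of_not_aemeasurable h] at hY
    exact invGammaMeasure_ne_zero m hm ht hY.symm
  have hjoint := (indepFun_iff_map_prod_eq_prod_map_map hXm hYm).mp hXY
  rw [hX, hY] at hjoint
  set E : Set (ℝ × ℝ) := (Prod.snd ⁻¹' S) ∩ {p : ℝ × ℝ | p.2 ≤ p.1} with hE
  have hEmeas : MeasurableSet E :=
    (hS.preimage measurable_snd).inter (measurableSet_le measurable_snd measurable_fst)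
  have hpre : {ω | Y ω ∈ S} ∩ {ω | X ω ≥ Y ω} = (fun ω => (X ω, Y ω)) ⁻¹' E := rfl
  -- the measurable pdf for m, t
  have hmeasf : Measurable fun y => ENNReal.ofReal (invGammaPDFReal m t y) := by
    apply Measurable.ennreal_ofReal
    unfold invGammaPDFReal
    apply Measurable.ite measurableSet_Ioi <;> fun_prop
  have hmeasg : Measurable fun y => invGammaMeasure n s (Set.Ici y) :=
    Antitone.measurable (fun a b hab => measure_mono (Set.Ici_subset_Ici.mpr hab))
  have step1 : P ({ω | Y ω ∈ S} ∩ {ω | X ω ≥ Y ω})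
      = ∫⁻ y in S, ENNReal.ofReal (invGammaPDFReal m t y)
          * invGammaMeasure n s (Set.Ici y) := by
    rw [hpre, ← Measure.map_apply_of_aemeasurable (hXm.prodMk hYm) hEmeas, hjoint,
      Measure.prod_apply_symm hEmeas]
    have hslice : (fun y => invGammaMeasure n s ((fun x => (x, y)) ⁻¹' E))
        = S.indicator (fun y => invGammaMeasure n s (Set.Ici y)) := by
      funext y
      by_cases hy : y ∈ S
      · have : (fun x => (x, y)) ⁻¹' E = Set.Ici y := by
          ext x; simp [hE, hy, Set.mem_Ici]
        rw [this, Set.indicator_of_mem hy]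
      · have : (fun x => (x, y)) ⁻¹' E = ∅ := by
          ext x; simp [hE, hy]
        rw [this, Set.indicator_of_notMem hy]
        simp
    rw [hslice, lintegral_indicator hS, invGammaMeasure,
      setLIntegral_withDensity_eq_setLIntegral_mul volume hmeasf hmeasg hS]
    rfl
  have step2 : ∀ y ∈ S, ENNReal.ofReal (invGammaPDFReal m t y)
      * invGammaMeasure n s (Set.Ici y)
      = ENNReal.ofReal ((lowerIncGamma n (s / y) / Real.Gamma n) *
          (t ^ m / Real.Gamma m * y ^ (-(m : ℤ) - 1) * Real.exp (-(t / y)))) := by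
    intro y hyS
    have hy : 0 < y := hS0 hyS
    rw [invGammaMeasure_Ici n hn hs hy, ← ENNReal.ofReal_mul (invGammaPDFReal_nonneg m hm ht y),
      invGammaPDFReal, if_pos hy]
    rw [mul_comm]
  rw [step1, setLIntegral_congr_fun hS step2]
  -- now convert the real integral
  have hF_nonneg : ∀ y ∈ S, 0 ≤ (lowerIncGamma n (s / y) / Real.Gamma n) *
      (t ^ m / Real.Gamma m * y ^ (-(m : ℤ) - 1) * Real.exp (-(t / y))) := by
    intro y hyS
    have hy : 0 < y := hS0 hyS
    have h1 : 0 ≤ lowerIncGamma n (s / y) := lowerIncGamma_nonneg n (div_pos hs hy).le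
    have h2 : 0 ≤ y ^ (-(m:ℤ) - 1) := zpow_nonneg hy.le _
    positivity
  have hF_cont : ContinuousOn (fun y => (lowerIncGamma n (s / y) / Real.Gamma n) *
      (t ^ m / Real.Gamma m * y ^ (-(m : ℤ) - 1) * Real.exp (-(t / y)))) (Set.Ioi 0) := by
    have hc0 : Continuous (lowerIncGamma n) := by
      apply intervalIntegral.continuous_primitive
      intro a b
      exact ((by continuity : Continuous fun u : ℝ => u ^ (n-1) * Real.exp (-u))).intervalIntegrable a b
    have hdiv : ContinuousOn (fun y : ℝ => s / y) (Set.Ioi 0) :=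
      continuousOn_const.div continuousOn_id (fun y hy => ne_of_gt hy)
    have hdiv' : ContinuousOn (fun y : ℝ => t / y) (Set.Ioi 0) :=
      continuousOn_const.div continuousOn_id (fun y hy => ne_of_gt hy)
    have hzpow : ContinuousOn (fun y : ℝ => y ^ (-(m:ℤ) - 1)) (Set.Ioi 0) :=
      fun y hy => (continuousAt_zpow₀ y _ (Or.inl (ne_of_gt hy))).continuousWithinAt
    exact ((hc0.comp_continuousOn hdiv).div_const _).mul
      (((continuousOn_const.mul hzpow)).mul
        (Real.continuous_exp.comp_continuousOn hdiv'.neg))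
  have hF_meas : AEStronglyMeasurable (fun y => (lowerIncGamma n (s / y) / Real.Gamma n) *
      (t ^ m / Real.Gamma m * y ^ (-(m : ℤ) - 1) * Real.exp (-(t / y))))
      (volume.restrict S) := by
    apply (hF_cont.aestronglyMeasurable measurableSet_Ioi).mono_measure
    exact Measure.restrict_mono hS0 le_rfl
  rw [integral_eq_lintegral_of_nonneg_ae
    ((ae_restrict_iff' hS).mpr (ae_of_all _ hF_nonneg)) hF_meas]
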